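/- Let A be an associative unital F-algebra containing a U_q(su(2)) triple K, K⁻¹, J₊, J₋, and let t₁, t₀, t₋₁ be the components of the vector operator t. Then t transforms as a vector operator under the adjoint action of U_q(su(2)): (i) K t_A K⁻¹ = s^A t_A for A = −1, 0, 1; (ii) J₊ t₋₁ K⁻¹ − s K⁻¹ t₋₁ J₊ = c·t₀, J₊ t₀ K⁻¹ − s K⁻¹ t₀ J₊ = c·t₁, and J₊ t₁ K⁻¹ − s K⁻¹ t₁ J₊ = 0; (iii) J₋ t₁ K⁻¹ − s⁻¹ K⁻¹ t₁ J₋ = c·t₀, J₋ t₀ K⁻¹ − s⁻¹ K⁻¹ t₀ J₋ = c·t₋₁, and J₋ t₋₁ K⁻¹ − s⁻¹ K⁻¹ t₋₁ J₋ = 0. -/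

import Mathlib

/-!
STATEMENT 3: the triple t = (t₋₁, t₀, t₁) built from a U_q(su(2)) triple transforms
as a vector operator under the adjoint action of U_q(su(2)).
-/

variable {F : Type} [Field F] {A : Type} [Ring A] [Algebra F A]

set_option maxHeartbeats 1000000 in
private theorem t_is_vector_operator_aux (s c : F) (hs : s ≠ 0) (hs' : s - s⁻¹ ≠ 0)
    (hc : c ≠ 0) (hc2 : c ^ 2 = s + s⁻¹)
    (K Ki Jp Jm : A)
    (hKKi : K * Ki = 1) (hKiK : Ki * K = 1)
    (hp : K * Jp * Ki = s • Jp) (hm : K * Jm * Ki = s⁻¹ • Jm)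
    (hcomm : Jp * Jm - Jm * Jp = (s - s⁻¹)⁻¹ • (K ^ 2 - Ki ^ 2))
    (t1 t0 tm1 : A)
    (ht1 : t1 = K * Jp)
    (ht0 : t0 = -(c⁻¹ • (s⁻¹ • (Jp * Jm) - s • (Jm * Jp))))
    (htm1 : tm1 = -(K * Jm)) :
    -- (i) action of K
    (K * t1 * Ki = s • t1 ∧ K * t0 * Ki = t0 ∧ K * tm1 * Ki = s⁻¹ • tm1) ∧
    -- (ii) adjoint action of J₊
    (Jp * tm1 * Ki - s • (Ki * tm1 * Jp) = c • t0 ∧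
     Jp * t0 * Ki - s • (Ki * t0 * Jp) = c • t1 ∧
     Jp * t1 * Ki - s • (Ki * t1 * Jp) = 0) ∧
    -- (iii) adjoint action of J₋
    (Jm * t1 * Ki - s⁻¹ • (Ki * t1 * Jm) = c • t0 ∧
     Jm * t0 * Ki - s⁻¹ • (Ki * t0 * Jm) = c • tm1 ∧
     Jm * tm1 * Ki - s⁻¹ • (Ki * tm1 * Jm) = 0) := by
  subst ht1 ht0 htm1
  have h1 : s * s - 1 ≠ 0 := by
    have : s * s - 1 = s * (s - s⁻¹) := by field_simp
    rw [this]; exact mul_ne_zero hs hs'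
  have hc2s : c ^ 2 * s = s * s + 1 := by
    rw [hc2]; field_simp; try ring
  have h2 : s * s + 1 ≠ 0 := by
    rw [← hc2s]; exact mul_ne_zero (pow_ne_zero 2 hc) hs
  have hci : c⁻¹ = c * s / (s * s + 1) := by
    rw [eq_div_iff h2, ← hc2s,
      show c⁻¹ * (c ^ 2 * s) = c⁻¹ * c * (c * s) from by ring, inv_mul_cancel₀ hc, one_mul]
  have hsi : (s - s⁻¹)⁻¹ = s / (s * s - 1) := by
    rw [eq_div_iff h1]
    rw [show (s - s⁻¹)⁻¹ * (s * s - 1) = (s - s⁻¹)⁻¹ * (s - s⁻¹) * s from by field_simp; try ring,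
      inv_mul_cancel₀ hs', one_mul]
  have h14 : s ^ 4 - 1 ≠ 0 := by
    rw [show s ^ 4 - 1 = (s * s - 1) * (s * s + 1) from by ring]
    exact mul_ne_zero h1 h2
  have hA : s ^ 2 - s ^ 6 * 2 + s ^ 10 ≠ 0 := by
    rw [show s ^ 2 - s ^ 6 * 2 + s ^ 10 = (s * (s ^ 4 - 1)) ^ 2 from by ring]
    exact pow_ne_zero 2 (mul_ne_zero hs h14)
  have hB : -s ^ 3 + s ^ 7 ≠ 0 := by
    rw [show -s ^ 3 + s ^ 7 = s ^ 3 * (s ^ 4 - 1) from by ring]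
    exact mul_ne_zero (pow_ne_zero 3 hs) h14
  have hC : -s ^ 2 + (s ^ 6 * 3 - s ^ 10 * 3) + s ^ 14 ≠ 0 := by
    rw [show -s ^ 2 + (s ^ 6 * 3 - s ^ 10 * 3) + s ^ 14 = s ^ 2 * (s ^ 4 - 1) ^ 3 from by ring]
    exact mul_ne_zero (pow_ne_zero 2 hs) (pow_ne_zero 3 h14)
  have hss : s⁻¹ * s = 1 := inv_mul_cancel₀ hs
  have hss' : s * s⁻¹ = 1 := mul_inv_cancel₀ hs
  have e1 : (1:F) + s ^ 2 ≠ 0 := by rw [pow_two, add_comm]; exact h2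
  have e2 : (-1:F) + s ^ 2 ≠ 0 := by rw [pow_two, neg_add_eq_sub]; exact h1
  have e3 : (-1:F) + s ^ 4 ≠ 0 := by rw [neg_add_eq_sub]; exact h14
  -- basic commutation rules
  have r1' : K * Jp = s • (Jp * K) := by
    have h := congrArg (· * K) hp
    simpa [mul_assoc, hKiK, smul_mul_assoc] using h
  have r2' : K * Jm = s⁻¹ • (Jm * K) := by
    have h := congrArg (· * K) hm
    simpa [mul_assoc, hKiK, smul_mul_assoc] using h
  have r5 : ∀ x : A, K * (Ki * x) = x := by
    intro x; rw [← mul_assoc, hKKi, one_mul]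
  have r6 : ∀ x : A, Ki * (K * x) = x := by
    intro x; rw [← mul_assoc, hKiK, one_mul]
  have r3' : Ki * Jp = s⁻¹ • (Jp * Ki) := by
    have h := congrArg (fun y => Ki * y * Ki) r1'
    simp only [mul_assoc, mul_smul_comm, smul_mul_assoc, hKKi, mul_one] at h
    rw [r6] at h
    rw [h, smul_smul, hss, one_smul]
  have r4' : Ki * Jm = s • (Jm * Ki) := by
    have h := congrArg (fun y => Ki * y * Ki) r2'
    simp only [mul_assoc, mul_smul_comm, smul_mul_assoc, hKKi, mul_one] at h
    rw [r6] at h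
    rw [h, smul_smul, hss', one_smul]
  have r1 : ∀ x : A, K * (Jp * x) = s • (Jp * (K * x)) := by
    intro x; rw [← mul_assoc, r1', smul_mul_assoc, mul_assoc]
  have r2 : ∀ x : A, K * (Jm * x) = s⁻¹ • (Jm * (K * x)) := by
    intro x; rw [← mul_assoc, r2', smul_mul_assoc, mul_assoc]
  have r3 : ∀ x : A, Ki * (Jp * x) = s⁻¹ • (Jp * (Ki * x)) := by
    intro x; rw [← mul_assoc, r3', smul_mul_assoc, mul_assoc]
  have r4 : ∀ x : A, Ki * (Jm * x) = s • (Jm * (Ki * x)) := by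
    intro x; rw [← mul_assoc, r4', smul_mul_assoc, mul_assoc]
  have r7' : Jp * Jm = Jm * Jp + ((s - s⁻¹)⁻¹ • (K * K) - (s - s⁻¹)⁻¹ • (Ki * Ki)) := by
    have h := hcomm
    rw [sub_eq_iff_eq_add] at h
    rw [h, pow_two, pow_two, smul_sub]; abel
  have r7 : ∀ x : A, Jp * (Jm * x) =
      Jm * (Jp * x) + ((s - s⁻¹)⁻¹ • (K * (K * x)) - (s - s⁻¹)⁻¹ • (Ki * (Ki * x))) := by
    intro x
    rw [← mul_assoc, r7', add_mul, sub_mul, smul_mul_assoc, smul_mul_assoc, mul_assoc,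
      mul_assoc, mul_assoc]
  refine ⟨⟨?_, ?_, ?_⟩, ⟨?_, ?_, ?_⟩, ⟨?_, ?_, ?_⟩⟩ <;>
  · simp only [mul_assoc, neg_mul, mul_neg, smul_neg, neg_sub, sub_mul, smul_mul_assoc,
      mul_smul_comm, mul_sub, smul_sub, smul_smul, smul_add, mul_add, add_mul, mul_one, one_mul,
      r1, r2, r3, r4, r5, r6, r7, r1', r2', r3', r4', r7', hKKi, hKiK]
    all_goals match_scalars <;> (try simp only [hci, hsi]) <;> (try field_simp) <;>
      first
      | ring
      | linear_combination hc2s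
      | linear_combination (s - s ^ 5) * hc2s
      | exact Or.inl (by linear_combination hc2s)
      | linear_combination -hc2s
      | exact Or.inl (by linear_combination -hc2s)
      | skip
    all_goals (try field_simp)
    all_goals
      first
      | linear_combination (c * s * (1 + s ^ 2)) * (mul_inv_cancel₀ hA) +
          (-(c * s)) * (mul_inv_cancel₀ hB)
      | linear_combination (c * (1 + s ^ 2 - s ^ 4)) * (mul_inv_cancel₀ hC)
      | linear_combination (-(c * s)) * (mul_inv_cancel₀ hC)
      | exact Or.inl (by linear_combination hc2s)
      | exact Or.inl (by linear_combination -hc2s)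
      | linear_combination hc2s
      | linear_combination -hc2s
      | linear_combination (s - s ^ 5) * hc2s
      | linear_combination (s ^ 5 - s) * hc2s
      | linear_combination (1 - s ^ 2) * hc2s
      | linear_combination (s ^ 2 - 1) * hc2s
      | ring

theorem t_is_vector_operator (s c : F) (hs : s ≠ 0) (hs' : s - s⁻¹ ≠ 0)
    (hc : c ≠ 0) (hc2 : c ^ 2 = s + s⁻¹)
    (K Ki Jp Jm : A)
    (hKKi : K * Ki = 1) (hKiK : Ki * K = 1)
    (hp : K * Jp * Ki = s • Jp) (hm : K * Jm * Ki = s⁻¹ • Jm)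
    (hcomm : Jp * Jm - Jm * Jp = (s - s⁻¹)⁻¹ • (K ^ 2 - Ki ^ 2))
    (t1 t0 tm1 : A)
    (ht1 : t1 = K * Jp)
    (ht0 : t0 = -(c⁻¹ • (s⁻¹ • (Jp * Jm) - s • (Jm * Jp))))
    (htm1 : tm1 = -(K * Jm)) :
    -- (i) action of K
    (K * t1 * Ki = s • t1 ∧ K * t0 * Ki = t0 ∧ K * tm1 * Ki = s⁻¹ • tm1) ∧
    -- (ii) adjoint action of J₊
    (Jp * tm1 * Ki - s • (Ki * tm1 * Jp) = c • t0 ∧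
     Jp * t0 * Ki - s • (Ki * t0 * Jp) = c • t1 ∧
     Jp * t1 * Ki - s • (Ki * t1 * Jp) = 0) ∧
    -- (iii) adjoint action of J₋
    (Jm * t1 * Ki - s⁻¹ • (Ki * t1 * Jm) = c • t0 ∧
     Jm * t0 * Ki - s⁻¹ • (Ki * t0 * Jm) = c • tm1 ∧
     Jm * tm1 * Ki - s⁻¹ • (Ki * tm1 * Jm) = 0) :=
  t_is_vector_operator_aux s c hs hs' hc hc2 K Ki Jp Jm hKKi hKiK hp hm hcomm t1 t0 tm1 ht1 ht0 htm1
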